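/- arXiv:1702.08279 — 3 statements merged into one kernel-verified Lean document; each statement's English description precedes it below -/
import Mathlib

section
/- Assume in addition that C is braided monoidal. Then for all objects x and y of C, the translation endofunctor τ_x and the evanescence endofunctor κ_y commute up to natural isomorphism: there is a natural isomorphism τ_x ∘ κ_y ≅ κ_y ∘ τ_x of endofunctors of Fct(C, A). -/
open CategoryTheory CategoryTheory.Limits CategoryTheory.MonoidalCategory

variable {C : Type*} [Category C] [MonoidalCategory C]
variable {A : Type*} [Category A] [Abelian A]

/-- The translation endofunctor `τ_x` of `Fct(C, A)`: precomposition with `x ⊗ -`. -/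
noncomputable def tauF (A : Type*) [Category A] (x : C) : (C ⥤ A) ⥤ (C ⥤ A) :=
  (Functor.whiskeringLeft C C A).obj (tensorLeft x)

/-- The component `i_x(F) : F ⟶ τ_x F`, whose component at `c` is
`F` applied to `c ≅ 𝟙 ⊗ c ⟶ x ⊗ c`. -/
def iApp (hI : IsInitial (𝟙_ C)) (x : C) (F : C ⥤ A) : F ⟶ tensorLeft x ⋙ F where
  app c := F.map ((λ_ c).inv ≫ hI.to x ▷ c)
  naturality c c' f := by
    dsimp
    rw [← F.map_comp, ← F.map_comp]
    congr 1
    rw [leftUnitor_inv_naturality_assoc, whisker_exchange, Category.assoc]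

/-- The natural transformation `i_x : Id ⟶ τ_x` of endofunctors of `Fct(C, A)`. -/
noncomputable def iNT (hI : IsInitial (𝟙_ C)) (x : C) :
    𝟭 (C ⥤ A) ⟶ tauF A x where
  app F := iApp hI x F
  naturality F G η := by
    ext c
    exact (η.naturality _).symm

/-- The evanescence endofunctor `κ_x = ker(i_x)` of `Fct(C, A)`. -/
noncomputable def kappaF (hI : IsInitial (𝟙_ C)) (x : C) : (C ⥤ A) ⥤ (C ⥤ A) :=
  kernel (iNT (A := A) hI x)

/-- The difference endofunctor `δ_x = coker(i_x)` of `Fct(C, A)`. -/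
noncomputable def deltaF (hI : IsInitial (𝟙_ C)) (x : C) : (C ⥤ A) ⥤ (C ⥤ A) :=
  cokernel (iNT (A := A) hI x)


section Aux

variable [BraidedCategory C]

lemma braid_exchange_key (hI : IsInitial (𝟙_ C)) (x y c : C) :
    (λ_ (x ⊗ c)).inv ≫ hI.to y ▷ (x ⊗ c) ≫ (α_ y x c).inv ≫ (β_ y x).hom ▷ c ≫ (α_ x y c).hom
      = x ◁ ((λ_ c).inv ≫ hI.to y ▷ c) := by
  rw [associator_inv_naturality_left_assoc, ← comp_whiskerRight_assoc,
    BraidedCategory.braiding_naturality_left, braiding_tensorUnit_left]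
  rw [leftUnitor_tensor_inv]
  simp only [Category.assoc, Iso.hom_inv_id_assoc, Iso.inv_hom_id_assoc, comp_whiskerRight,
    associator_naturality_middle, inv_hom_whiskerRight_assoc,
    triangle_assoc_comp_right_inv_assoc, MonoidalCategory.whiskerLeft_comp]

/-- The braiding exchange isomorphism `tensorLeft x ⋙ tensorLeft y ≅ tensorLeft y ⋙ tensorLeft x`. -/
noncomputable def braidExch (x y : C) :
    tensorLeft x ⋙ tensorLeft y ≅ tensorLeft y ⋙ tensorLeft x :=
  NatIso.ofComponents
    (fun c => (α_ y x c).symm ≪≫ whiskerRightIso (β_ y x) c ≪≫ α_ x y c)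
    (fun {c c'} f => by
      dsimp [whiskerRightIso]
      rw [associator_inv_naturality_right_assoc, whisker_exchange_assoc]
      simp)

/-- The exchange isomorphism `τ_y ⋙ τ_x ≅ τ_x ⋙ τ_y` of endofunctors of `Fct(C, A)`. -/
noncomputable def tauExch (x y : C) : tauF A y ⋙ tauF A x ≅ tauF A x ⋙ tauF A y :=
  NatIso.ofComponents
    (fun F => Functor.isoWhiskerRight (braidExch x y) F)
    (fun {F G} η => by
      ext c
      exact (η.naturality _).symm)

lemma whiskered_iNT_eq (hI : IsInitial (𝟙_ C)) (x y : C) :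
    ((Functor.whiskeringLeft (C ⥤ A) (C ⥤ A) (C ⥤ A)).obj (tauF A x)).map (iNT (A := A) hI y)
      = ((Functor.whiskeringRight (C ⥤ A) (C ⥤ A) (C ⥤ A)).obj (tauF A x)).map (iNT (A := A) hI y)
        ≫ (tauExch (A := A) x y).hom := by
  ext F c
  dsimp [tauF, iNT, iApp, tauExch, braidExch]
  change F.map _ = F.map _ ≫ F.map ((α_ y x c).inv ≫ (β_ y x).hom ▷ c ≫ (α_ x y c).hom)
  rw [← F.map_comp, ← braid_exchange_key hI x y c]
  simp

end Aux

instance tauF_preservesZero (x : C) : (tauF A x).PreservesZeroMorphisms where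
  map_zero F G := by ext c; rfl

instance whiskeringLeft_tauF_preservesZero (x : C) :
    ((Functor.whiskeringLeft (C ⥤ A) (C ⥤ A) (C ⥤ A)).obj (tauF A x)).PreservesZeroMorphisms where
  map_zero F G := by ext F' c; rfl

instance whiskeringRight_tauF_preservesZero (x : C) :
    ((Functor.whiskeringRight (C ⥤ A) (C ⥤ A) (C ⥤ A)).obj (tauF A x)).PreservesZeroMorphisms where
  map_zero F G := by ext F' c; rfl

/-- The translation and evanescence endofunctors commute up to natural isomorphism:
`τ_x ∘ κ_y ≅ κ_y ∘ τ_x`. -/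
theorem tau_comm_kappa [BraidedCategory C] (hI : IsInitial (𝟙_ C)) (x y : C) :
    Nonempty ((kappaF (A := A) hI y ⋙ tauF A x) ≅ (tauF A x ⋙ kappaF hI y)) := by
  haveI : PreservesLimitsOfShape WalkingParallelPair (tauF A x) := by
    unfold tauF; infer_instance
  let i := iNT (A := A) hI y
  let R := (Functor.whiskeringRight (C ⥤ A) (C ⥤ A) (C ⥤ A)).obj (tauF A x)
  let L := (Functor.whiskeringLeft (C ⥤ A) (C ⥤ A) (C ⥤ A)).obj (tauF A x)
  have h : L.map i = R.map i ≫ (tauExch (A := A) x y).hom := whiskered_iNT_eq hI x y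
  exact ⟨(PreservesKernel.iso R i : R.obj (kernel i) ≅ kernel (R.map i))
      ≪≫ (kernelCompMono (R.map i) (tauExch (A := A) x y).hom).symm
      ≪≫ kernelIsoOfEq h.symm
      ≪≫ (PreservesKernel.iso L i : L.obj (kernel i) ≅ kernel (L.map i)).symm⟩
end

section
/- Let (C, ⊗, 𝟙) and (C', ⊗', 𝟙') be braided monoidal categories whose unit objects are initial, let α : C → C' be a strong monoidal functor, and let A be an abelian category. Then precomposition with α preserves strong polynomiality: for every n ≥ 0, if F : C' → A is strong polynomial of degree ≤ n (i.e., F ∈ Pol_n in Fct(C', A)), then F ∘ α is strong polynomial of degree ≤ n in Fct(C, A). -/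
open CategoryTheory CategoryTheory.Limits CategoryTheory.MonoidalCategory

section Defs

variable {C : Type*} [Category C] [MonoidalCategory C]
variable {A : Type*} [Category A] [Abelian A]

/-- `PolAux hI (n+1) F` says that `F` is strong polynomial of degree `≤ n`;
`PolAux hI 0 F` says that `F` is the zero functor (degree `≤ -1`). -/
def PolAux (hI : IsInitial (𝟙_ C)) : ℕ → (C ⥤ A) → Prop
  | 0 => fun F => IsZero F
  | n + 1 => fun F => ∀ x : C, PolAux hI n ((deltaF hI x).obj F)

/-- `Pol hI n F` : `F` is strong polynomial of degree `≤ n` (with `Pol_m = {0}` for `m < 0`). -/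
def Pol (hI : IsInitial (𝟙_ C)) (n : ℤ) (F : C ⥤ A) : Prop :=
  PolAux hI (n + 1).toNat F

end Defs

section Aux

variable {C : Type*} [Category C] [MonoidalCategory C]
variable {A : Type*} [Category A] [Abelian A]

/-- `PolAux` is invariant under isomorphism. -/
lemma polAux_of_iso (hI : IsInitial (𝟙_ C)) :
    ∀ (n : ℕ) {F G : C ⥤ A}, (F ≅ G) → PolAux hI n F → PolAux hI n G := by
  intro n
  induction n with
  | zero => intro F G e h; exact h.of_iso e.symm
  | succ n ih => intro F G e h x; exact ih ((deltaF hI x).mapIso e) (h x)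

/-- `δ_x F` computed as a pointwise cokernel. -/
noncomputable def deltaObjIso (hI : IsInitial (𝟙_ C)) (x : C) (F : C ⥤ A) :
    (deltaF hI x).obj F ≅ cokernel (iApp hI x F) :=
  PreservesCokernel.iso ((evaluation (C ⥤ A) (C ⥤ A)).obj F) (iNT hI x)

variable {C' : Type*} [Category C'] [MonoidalCategory C']
variable (α : C ⥤ C') [α.Monoidal]

instance whiskeringLeftObj_preservesZeroMorphisms :
    ((Functor.whiskeringLeft C C' A).obj α).PreservesZeroMorphisms where
  map_zero F G := by ext c; rfl

/-- The natural isomorphism `α ⋙ (α(x) ⊗ -) ⋙ F ≅ (x ⊗ -) ⋙ α ⋙ F` induced by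
the monoidal structure isomorphism `μ` of `α`. -/
noncomputable def muIsoNat (x : C) (F : C' ⥤ A) :
    (α ⋙ tensorLeft (α.obj x) ⋙ F) ≅ (tensorLeft x ⋙ α ⋙ F) :=
  NatIso.ofComponents (fun c => F.mapIso (Functor.Monoidal.μIso α x c)) (by
    intro c c' f
    dsimp
    rw [← F.map_comp, ← F.map_comp]
    congr 1
    exact Functor.LaxMonoidal.μ_natural_right α x f)

lemma iApp_precomp (hI : IsInitial (𝟙_ C)) (hI' : IsInitial (𝟙_ C'))
    (x : C) (F : C' ⥤ A) :
    Functor.whiskerLeft α (iApp hI' (α.obj x) F) ≫ (muIsoNat α x F).hom =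
      iApp hI x (α ⋙ F) := by
  ext c
  dsimp [iApp, muIsoNat]
  rw [← F.map_comp]
  congr 1
  have h : hI'.to (α.obj x) = Functor.LaxMonoidal.ε α ≫ α.map (hI.to x) :=
    hI'.hom_ext _ _
  rw [h, Functor.map_comp, Functor.Monoidal.map_leftUnitor_inv,
    Functor.Monoidal.map_whiskerRight]
  simp only [MonoidalCategory.comp_whiskerRight, Category.assoc,
    Functor.Monoidal.μ_δ_assoc, Functor.Monoidal.μIso_hom]

/-- The key isomorphism `δ_x (F ∘ α) ≅ (δ_{α x} F) ∘ α`. -/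
noncomputable def deltaCompIso (hI : IsInitial (𝟙_ C)) (hI' : IsInitial (𝟙_ C'))
    (x : C) (F : C' ⥤ A) :
    (deltaF hI x).obj (α ⋙ F) ≅ α ⋙ (deltaF hI' (α.obj x)).obj F :=
  deltaObjIso hI x (α ⋙ F) ≪≫
    (cokernel.mapIso (Functor.whiskerLeft α (iApp hI' (α.obj x) F))
      (iApp hI x (α ⋙ F)) (Iso.refl _) (muIsoNat α x F)
      (by rw [iApp_precomp α hI hI' x F]; simp)).symm ≪≫
    (PreservesCokernel.iso ((Functor.whiskeringLeft C C' A).obj α)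
      (iApp hI' (α.obj x) F)).symm ≪≫
    ((Functor.whiskeringLeft C C' A).obj α).mapIso (deltaObjIso hI' (α.obj x) F).symm

lemma polAux_precomp (hI : IsInitial (𝟙_ C)) (hI' : IsInitial (𝟙_ C')) :
    ∀ (n : ℕ) (F : C' ⥤ A), PolAux hI' n F → PolAux hI n (α ⋙ F) := by
  intro n
  induction n with
  | zero =>
    intro F h
    exact Functor.isZero _ fun c => (Functor.isZero_iff F).mp h (α.obj c)
  | succ n ih =>
    intro F h x
    exact polAux_of_iso hI n (deltaCompIso α hI hI' x F).symm
      (ih ((deltaF hI' (α.obj x)).obj F) (h (α.obj x)))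

end Aux

/-- Precomposition with a strong monoidal functor between braided monoidal categories with
initial units preserves strong polynomiality of degree `≤ n`. -/
theorem pol_precomp_strong_monoidal
    {C : Type*} [Category C] [MonoidalCategory C] [BraidedCategory C]
    {C' : Type*} [Category C'] [MonoidalCategory C'] [BraidedCategory C']
    {A : Type*} [Category A] [Abelian A]
    (hI : IsInitial (𝟙_ C)) (hI' : IsInitial (𝟙_ C'))
    (α : C ⥤ C') [α.Monoidal]
    (n : ℕ) (F : C' ⥤ A) (hF : Pol hI' n F) :
    Pol hI n (α ⋙ F) := by
  have hn : ((n : ℤ) + 1).toNat = n + 1 := by omega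
  unfold Pol at hF ⊢
  rw [hn] at hF ⊢
  exact polAux_precomp α hI hI' (n + 1) F hF
end

section
/- For every natural number n ≥ 2, every index i with 1 ≤ i ≤ n−1, and every element w of the free group F_n, the following equality holds in the braid group B_{n+1}: σ_{i+1} · ς_n(w) · σ_{i+1}^{-1} = ς_n(A_i(w)), where A_i : F_n → F_n is the group endomorphism determined by A_i(g_i) = g_{i+1}, A_i(g_{i+1}) = g_{i+1}^{-1} g_i g_{i+1}, and A_i(g_j) = g_j for j ∉ {i, i+1} (the Artin action of the generator σ_i on F_n). This is the coherence Condition 2.9 of the paper for the Artin action a_{n,1} together with the morphisms ς_{n,1}: (id_1 ♮ σ) ∘ ς_n(g) = ς_n(a_{n,1}(σ)(g)) ∘ (id_1 ♮ σ) for every σ in B_n and g in F_n. -/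
open FreeGroup

/-- The braid relations on `m` Artin generators (indexed by `Fin m`, where index `k`
stands for the classical generator `σ_{k+1}`):
`σ_i σ_j σ_i = σ_j σ_i σ_j` when `|i - j| = 1` and `σ_i σ_j = σ_j σ_i` when `|i - j| ≥ 2`. -/
def braidRels (m : ℕ) : Set (FreeGroup (Fin m)) :=
  {r | (∃ i j : Fin m, (i : ℕ) + 1 = (j : ℕ) ∧
          r = of i * of j * of i * (of j * of i * of j)⁻¹) ∨
       (∃ i j : Fin m, (i : ℕ) + 2 ≤ (j : ℕ) ∧
          r = of i * of j * (of j * of i)⁻¹)}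

/-- `Braid m` is the braid group `B_{m+1}` on `m + 1` strands, presented with `m` Artin
generators `σ_1, …, σ_m` (index `k : Fin m` corresponds to `σ_{k+1}`). -/
abbrev Braid (m : ℕ) := PresentedGroup (braidRels m)

/-- `sig m k` is the Artin generator `σ_{k+1}` of the braid group `B_{m+1}` when `k < m`
(and junk value `1` otherwise). -/
def sig (m : ℕ) (k : ℕ) : Braid m :=
  if h : k < m then PresentedGroup.of (⟨k, h⟩ : Fin m) else 1

/-- `pword m j` is the product `σ_j σ_{j-1} ⋯ σ_1` in `B_{m+1}` (classical notation),
i.e. `sig m (j-1) * ⋯ * sig m 0`. -/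
def pword (m j : ℕ) : Braid m := ((List.range j).reverse.map (sig m)).prod

/-- The image of the free generator `g_{j+1}` of `F_n` under `ς_n : F_n → B_{n+1}`:
`σ_1⁻¹ σ_2⁻¹ ⋯ σ_{i-1}⁻¹ σ_i² σ_{i-1} ⋯ σ_2 σ_1` where `i = j + 1`. -/
def sigmaWord (n : ℕ) (j : Fin n) : Braid n :=
  (pword n j.val)⁻¹ * (sig n j.val) ^ 2 * pword n j.val

/-- The pure braid local system morphism `ς_n : F_n → B_{n+1}`, determined on the free
generators `g_1, …, g_n` of `F_n` (indexed by `Fin n`) by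
`ς_n(g_i) = σ_1⁻¹ σ_2⁻¹ ⋯ σ_{i-1}⁻¹ σ_i² σ_{i-1} ⋯ σ_2 σ_1`. -/
def varsigma (n : ℕ) : FreeGroup (Fin n) →* Braid n :=
  FreeGroup.lift (sigmaWord n)

/-- The Artin action of the generator `σ_{i₀+1}` (classical 1-based index `i₀ + 1`,
with `i₀ + 1 ≤ n - 1`) on the free group `F_n`: it sends `g_{i₀+1} ↦ g_{i₀+2}`,
`g_{i₀+2} ↦ g_{i₀+2}⁻¹ g_{i₀+1} g_{i₀+2}`, and fixes all other free generators
(indices here are 0-based: `j : Fin n` stands for the classical generator `g_{j+1}`). -/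
def artin (n : ℕ) (i : ℕ) (hi : i + 1 < n) : FreeGroup (Fin n) →* FreeGroup (Fin n) :=
  FreeGroup.lift fun j : Fin n =>
    if (j : ℕ) = i then FreeGroup.of (⟨i + 1, hi⟩ : Fin n)
    else if (j : ℕ) = i + 1 then
      (FreeGroup.of (⟨i + 1, hi⟩ : Fin n))⁻¹ *
        FreeGroup.of (⟨i, Nat.lt_of_succ_lt hi⟩ : Fin n) *
        FreeGroup.of (⟨i + 1, hi⟩ : Fin n)
    else FreeGroup.of j

/-! ### Auxiliary machinery -/

/-- `Wd n j` is `sigmaWord` with a bare natural-number index. -/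
def Wd (n j : ℕ) : Braid n := (pword n j)⁻¹ * (sig n j) ^ 2 * pword n j

lemma rel_one {m : ℕ} {r : FreeGroup (Fin m)} (h : r ∈ braidRels m) :
    PresentedGroup.mk (braidRels m) r = 1 :=
  (QuotientGroup.eq_one_iff r).mpr (Subgroup.subset_normalClosure h)

lemma sig_comm {n : ℕ} {k l : ℕ} (h : k + 2 ≤ l) :
    sig n k * sig n l = sig n l * sig n k := by
  by_cases hl : l < n
  · have hk : k < n := by omega
    have h1 := rel_one (m := n) (Or.inr ⟨⟨k, hk⟩, ⟨l, hl⟩, h, rfl⟩)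
    simp only [_root_.map_mul, _root_.map_inv] at h1
    simp only [sig, dif_pos hk, dif_pos hl]
    exact mul_inv_eq_one.mp h1
  · simp [sig, hl]

lemma sig_braid {n : ℕ} {k : ℕ} (h : k + 1 < n) :
    sig n k * sig n (k+1) * sig n k = sig n (k+1) * sig n k * sig n (k+1) := by
  have hk : k < n := by omega
  have h1 := rel_one (m := n) (Or.inl ⟨⟨k, hk⟩, ⟨k+1, h⟩, rfl, rfl⟩)
  simp only [_root_.map_mul, _root_.map_inv] at h1
  simp only [sig, dif_pos hk, dif_pos h]
  exact mul_inv_eq_one.mp h1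

lemma pword_zero (n : ℕ) : pword n 0 = 1 := rfl

lemma pword_succ (n j : ℕ) : pword n (j+1) = sig n j * pword n j := by
  simp [pword, List.range_succ]

lemma sig_pword_comm' {n : ℕ} (m : ℕ) : ∀ j, j < m → Commute (sig n m) (pword n j) := by
  intro j
  induction j with
  | zero => intro _; rw [pword_zero]; exact Commute.one_right _
  | succ j ih =>
    intro h
    rw [pword_succ]
    exact Commute.mul_right ((sig_comm (show j + 2 ≤ m by omega)).symm) (ih (by omega))

lemma sig_pword_comm {n : ℕ} {m j : ℕ} (h : j < m) :
    Commute (sig n m) (pword n j) := sig_pword_comm' m j h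

section
variable {G : Type*} [Group G]

lemma abs_shift {a b : G} (hbr : a*b*a = b*a*b) : a⁻¹*(b*b)*a = b*(a*a)*b⁻¹ := by
  have h1 : b*b*a*b = a*b*a*a := by
    calc b*b*a*b = b*(b*a*b) := by group
      _ = b*(a*b*a) := by rw [← hbr]
      _ = (b*a*b)*a := by group
      _ = (a*b*a)*a := by rw [← hbr]
      _ = a*b*a*a := by group
  calc a⁻¹*(b*b)*a = a⁻¹*(b*b*a*b)*b⁻¹ := by group
    _ = a⁻¹*(a*b*a*a)*b⁻¹ := by rw [h1]
    _ = b*(a*a)*b⁻¹ := by group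

lemma abs_comm4 {a b : G} (hbr : a*b*a = b*a*b) :
    b*(a*a)*(b*(a*a)) = a*a*(b*(a*a*b)) := by
  have h1 : b*(a*a)*(b*(a*a)) = (b*a*b)*(b*a*b) := by
    calc b*(a*a)*(b*(a*a)) = b*a*(a*b*a)*a := by group
      _ = b*a*(b*a*b)*a := by rw [hbr]
      _ = (b*a*b)*(a*b*a) := by group
      _ = (b*a*b)*(b*a*b) := by rw [hbr]
  have h2 : a*a*(b*(a*a*b)) = (b*a*b)*(b*a*b) := by
    calc a*a*(b*(a*a*b)) = a*(a*b*a)*(a*b) := by group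
      _ = a*(b*a*b)*(a*b) := by rw [hbr]
      _ = (a*b*a)*(b*a*b) := by group
      _ = (b*a*b)*(b*a*b) := by rw [hbr]
  rw [h1, h2]

lemma abs_case_b {s u : G} (hsu : s*u*(s*u) = u*s*(u*s)) :
    s*(s*u*s⁻¹)*s⁻¹ = (s*u*s⁻¹)⁻¹ * u * (s*u*s⁻¹) := by
  have h2 : s⁻¹*u*s*u = u*s*u*s⁻¹ := by
    calc s⁻¹*u*s*u = s⁻¹*(u*s*(u*s))*s⁻¹ := by group
      _ = s⁻¹*(s*u*(s*u))*s⁻¹ := by rw [hsu]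
      _ = u*s*u*s⁻¹ := by group
  calc s*(s*u*s⁻¹)*s⁻¹ = s*u⁻¹*(u*s*u*s⁻¹)*s⁻¹ := by group
    _ = s*u⁻¹*(s⁻¹*u*s*u)*s⁻¹ := by rw [← h2]
    _ = (s*u*s⁻¹)⁻¹ * u * (s*u*s⁻¹) := by group

lemma abs_case_d {a b u : G} (hbr : a*b*a = b*a*b) (hbu : b*u = u*b) :
    a * (b*(a*u*a⁻¹)*b⁻¹) * a⁻¹ = b*(a*u*a⁻¹)*b⁻¹ := by
  calc a*(b*(a*u*a⁻¹)*b⁻¹)*a⁻¹ = (a*b*a)*u*(a*b*a)⁻¹ := by group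
    _ = (b*a*b)*u*(b*a*b)⁻¹ := by rw [hbr]
    _ = b*(a*((b*u)*b⁻¹)*a⁻¹)*b⁻¹ := by group
    _ = b*(a*((u*b)*b⁻¹)*a⁻¹)*b⁻¹ := by rw [hbu]
    _ = b*(a*u*a⁻¹)*b⁻¹ := by group
end

lemma Wd_succ {n j : ℕ} (h : j + 1 < n) :
    Wd n (j+1) = sig n (j+1) * Wd n j * (sig n (j+1))⁻¹ := by
  have hbr := sig_braid (n := n) (k := j) h
  have hc : Commute (sig n (j+1)) (pword n j) := sig_pword_comm (by omega)
  set a := sig n j with ha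
  set b := sig n (j+1) with hb
  set P := pword n j with hP
  have h1 : P⁻¹ * b = b * P⁻¹ := (hc.inv_right.eq).symm
  have h2 : b⁻¹ * P = P * b⁻¹ := hc.inv_left.eq
  have hshift : a⁻¹*(b*b)*a = b*(a*a)*b⁻¹ := abs_shift hbr
  calc Wd n (j+1) = (a*P)⁻¹ * (b*b) * (a*P) := by rw [Wd, pword_succ, sq]
    _ = P⁻¹ * (a⁻¹*(b*b)*a) * P := by group
    _ = P⁻¹ * (b*(a*a)*b⁻¹) * P := by rw [hshift]
    _ = (P⁻¹*b)*(a*a)*(b⁻¹*P) := by group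
    _ = (b*P⁻¹)*(a*a)*(P*b⁻¹) := by rw [h1, h2]
    _ = b*(P⁻¹*(a*a)*P)*b⁻¹ := by group
    _ = b * Wd n j * b⁻¹ := by rw [Wd, sq]

/-- A generator with index at least `j + 2` commutes with `Wd n j`. -/
lemma sig_Wd_low {n : ℕ} {m j : ℕ} (h : j + 2 ≤ m) :
    Commute (sig n m) (Wd n j) := by
  have hP : Commute (sig n m) (pword n j) := sig_pword_comm (by omega)
  have hs : Commute (sig n m) (sig n j) := (sig_comm (show j + 2 ≤ m from h)).symm
  exact (hP.inv_right.mul_right (hs.pow_right 2)).mul_right hP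

/-- A generator with positive index less than `j` commutes with `Wd n j`. -/
lemma sig_Wd_high {n m : ℕ} (hm : 1 ≤ m) :
    ∀ j, m < j → j < n → Commute (sig n m) (Wd n j) := by
  intro j
  induction j with
  | zero => intro h _; omega
  | succ j ih =>
    intro hmj hjn
    rcases Nat.lt_or_ge m j with hlt | hge
    · -- inductive step: m + 2 ≤ j + 1
      rw [Wd_succ hjn]
      have h1 : Commute (sig n m) (sig n (j+1)) := sig_comm (by omega)
      exact (h1.mul_right (ih hlt (by omega))).mul_right h1.inv_right
    · -- base case: m = j
      obtain ⟨m', rfl⟩ : ∃ m', j = m' + 1 := ⟨j - 1, by omega⟩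
      obtain rfl : m = m' + 1 := by omega
      have e2 : Wd n (m'+1+1) = sig n (m'+1+1) * Wd n (m'+1) * (sig n (m'+1+1))⁻¹ :=
        Wd_succ hjn
      have e1 : Wd n (m'+1) = sig n (m'+1) * Wd n m' * (sig n (m'+1))⁻¹ :=
        Wd_succ (by omega)
      have hbu : sig n (m'+1+1) * Wd n m' = Wd n m' * sig n (m'+1+1) :=
        (sig_Wd_low (by omega)).eq
      have hbr := sig_braid (n := n) (k := m'+1) (by omega)
      have key : sig n (m'+1) * Wd n (m'+1+1) * (sig n (m'+1))⁻¹ = Wd n (m'+1+1) := by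
        rw [e2, e1]
        exact abs_case_d hbr hbu
      exact mul_inv_eq_iff_eq_mul.mp key

/-- For `n ≥ 2`, every Artin generator index `1 ≤ i ≤ n - 1` (here `i₀ = i - 1` is the
0-based index, so `i₀ + 1 < n`) and every `w ∈ F_n`, the equality
`σ_{i+1} · ς_n(w) · σ_{i+1}⁻¹ = ς_n(A_i(w))` holds in `B_{n+1}`:
the coherence Condition 2.9 of the paper for the Artin action and the pure braid local
system morphisms `ς_n`. (Here `σ_{i+1} = sig n (i₀ + 1)` since `sig` is 0-indexed.) -/
theorem varsigma_artin_conj (n : ℕ) (hn : 2 ≤ n) (i₀ : ℕ) (hi : i₀ + 1 < n)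
    (w : FreeGroup (Fin n)) :
    sig n (i₀ + 1) * varsigma n w * (sig n (i₀ + 1))⁻¹ =
      varsigma n (artin n i₀ hi w) := by
  have hv : ∀ k : Fin n, varsigma n (FreeGroup.of k) = Wd n k.val := fun k => by
    rw [varsigma, FreeGroup.lift_apply_of]; rfl
  have key : ∀ j : Fin n,
      sig n (i₀ + 1) * varsigma n (FreeGroup.of j) * (sig n (i₀ + 1))⁻¹ =
        varsigma n (artin n i₀ hi (FreeGroup.of j)) := by
    intro j
    rw [artin, FreeGroup.lift_apply_of]
    rcases lt_trichotomy (j : ℕ) i₀ with hj | hj | hj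
    · rw [if_neg (by omega), if_neg (by omega), hv j]
      have hc : Commute (sig n (i₀+1)) (Wd n j.val) := sig_Wd_low (by omega)
      rw [hc.eq, mul_inv_cancel_right]
    · rw [if_pos hj, hv j, hv ⟨i₀+1, hi⟩]
      have hjv : (j : ℕ) = i₀ := hj
      rw [hjv]
      exact (Wd_succ hi).symm
    · rcases Nat.eq_or_lt_of_le hj with hj1 | hj1
      · -- j = i₀ + 1
        rw [if_neg (by omega), if_pos hj1.symm]
        rw [_root_.map_mul, _root_.map_mul, _root_.map_inv, hv j, hv ⟨i₀+1, hi⟩, hv ⟨i₀, Nat.lt_of_succ_lt hi⟩]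
        have hjv : (j : ℕ) = i₀ + 1 := hj1.symm
        rw [hjv]
        -- abbreviations
        set s := sig n (i₀+1) with hs
        set c := sig n i₀ with hcdef
        set P := pword n i₀ with hPdef
        have hcP : Commute s P := sig_pword_comm (by omega)
        have e1 : Wd n (i₀+1) = s * Wd n i₀ * s⁻¹ := Wd_succ hi
        have hU : Wd n i₀ = P⁻¹*(c*c)*P := by rw [Wd, sq]
        set u := Wd n i₀ with hu
        have hsu : s*u*(s*u) = u*s*(u*s) := by
          have hl : s * u = P⁻¹ * (s*(c*c)) * P := by
            rw [hU, ← mul_assoc, ← mul_assoc, hcP.inv_right.eq]; group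
          have hr : u * s = P⁻¹ * ((c*c)*s) * P := by
            rw [hU, mul_assoc, ← hcP.eq]; group
          have hcomm4 : s*(c*c)*(s*(c*c)) = c*c*(s*(c*c*s)) :=
            abs_comm4 (sig_braid (n := n) (k := i₀) hi)
          calc s*u*(s*u) = (P⁻¹*(s*(c*c))*P) * (P⁻¹*(s*(c*c))*P) := by rw [← hl]
            _ = P⁻¹*(s*(c*c)*(s*(c*c)))*P := by group
            _ = P⁻¹*(c*c*(s*(c*c*s)))*P := by rw [hcomm4]
            _ = (P⁻¹*((c*c)*s)*P) * (P⁻¹*((c*c)*s)*P) := by group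
            _ = u*s*(u*s) := by rw [← hr, mul_assoc]
        rw [e1]
        exact abs_case_b hsu
      · -- j > i₀ + 1
        rw [if_neg (by omega), if_neg (by omega), hv j]
        have hc : Commute (sig n (i₀+1)) (Wd n j.val) :=
          sig_Wd_high (by omega) j.val hj1 j.isLt
        rw [hc.eq, mul_inv_cancel_right]
  induction w using FreeGroup.induction_on with
  | C1 => simp
  | of x => exact key x
  | inv_of x ihx =>
    rw [_root_.map_inv, _root_.map_inv, _root_.map_inv, ← ihx]
    group
  | mul x y ihx ihy =>
    rw [_root_.map_mul, _root_.map_mul, _root_.map_mul, ← ihx, ← ihy]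
    group
end
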